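/- Let n ≥ 1 and let A ∈ M_n(ℂ) be an upper triangular matrix such that (a) all diagonal entries of A are equal, and (b) every entry A_{i,i+1} on the first superdiagonal is nonzero. Then for an upper triangular matrix A' ∈ M_n(ℂ), the following are equivalent: (1) ‖f(A_i)‖ = ‖f(A'_i)‖ for every polynomial f ∈ ℂ[t] and every 1 ≤ i ≤ n, where X_i denotes the leading i×i principal submatrix of X; (2) A' = W*AW for some diagonal unitary matrix W ∈ M_n(ℂ). -/

import Mathlib

open Polynomial Matrix

/-- The operator norm of a complex matrix, i.e. its norm as a linear map on the
Euclidean space `ℂᵏ`; it equals `√(spr(X*X))`, the largest singular value. -/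
noncomputable def opNorm {k : ℕ} (X : Matrix (Fin k) (Fin k) ℂ) : ℝ :=
  ‖Matrix.toEuclideanCLM (𝕜 := ℂ) X‖

/-- The leading `k × k` principal submatrix of an `n × n` matrix. -/
def leadingSubmatrix {n : ℕ} (X : Matrix (Fin n) (Fin n) ℂ) (k : ℕ) (hk : k ≤ n) :
    Matrix (Fin k) (Fin k) ℂ :=
  X.submatrix (Fin.castLE hk) (Fin.castLE hk)

namespace UniqHelp

variable {K : ℕ}




noncomputable def vecN {K : ℕ} (f : Fin K → ℂ) : EuclideanSpace ℂ (Fin K) :=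
  (WithLp.equiv 2 _).symm f

@[simp] lemma vecN_apply (f : Fin K → ℂ) (i : Fin K) : vecN f i = f i := rfl

lemma normSq_one_of_norm_one {z : ℂ} (h : ‖z‖ = 1) : Complex.normSq z = 1 := by
  rw [Complex.normSq_eq_norm_sq, h]; norm_num

lemma mul_conj_eq_one {z : ℂ} (h : ‖z‖ = 1) : z * (starRingEnd ℂ) z = 1 := by
  rw [Complex.mul_conj, normSq_one_of_norm_one h]; norm_num

lemma conj_mul_eq_one {z : ℂ} (h : ‖z‖ = 1) : (starRingEnd ℂ) z * z = 1 := by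
  rw [mul_comm]; exact mul_conj_eq_one h

lemma toCLM_apply (X : Matrix (Fin K) (Fin K) ℂ) (v : EuclideanSpace ℂ (Fin K)) :
    Matrix.toEuclideanCLM (𝕜 := ℂ) X v = vecN (X *ᵥ (WithLp.equiv 2 _ v)) := by
  rfl

lemma norm_mulVec_le (X : Matrix (Fin K) (Fin K) ℂ) (f : Fin K → ℂ) :
    ‖vecN (X *ᵥ f)‖ ≤ opNorm X * ‖vecN f‖ := by
  have h := (Matrix.toEuclideanCLM (𝕜 := ℂ) X).le_opNorm (vecN f)
  rw [toCLM_apply] at h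
  have : WithLp.equiv 2 (Fin K → ℂ) (vecN f) = f := (WithLp.equiv 2 _).apply_symm_apply f
  rwa [this] at h

lemma opNorm_le_of (X : Matrix (Fin K) (Fin K) ℂ) (c : ℝ) (hc : 0 ≤ c)
    (h : ∀ f : Fin K → ℂ, ‖vecN (X *ᵥ f)‖ ≤ c * ‖vecN f‖) : opNorm X ≤ c := by
  refine ContinuousLinearMap.opNorm_le_bound _ hc (fun v => ?_)
  rw [toCLM_apply]
  have := h (WithLp.equiv 2 _ v)
  have hv : vecN (WithLp.equiv 2 (Fin K → ℂ) v) = v := (WithLp.equiv 2 _).symm_apply_apply v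
  rwa [hv] at this

lemma norm_vecN_sq (f : Fin K → ℂ) :
    ‖vecN f‖ ^ 2 = ∑ i, Complex.normSq (f i) := by
  rw [EuclideanSpace.norm_eq]
  rw [Real.sq_sqrt (by positivity)]
  refine Finset.sum_congr rfl (fun i _ => ?_)
  rw [vecN_apply, Complex.sq_norm]

lemma norm_vecN_eq (f g : Fin K → ℂ) (h : ∀ i, Complex.normSq (f i) = Complex.normSq (g i)) :
    ‖vecN f‖ = ‖vecN g‖ := by
  rw [EuclideanSpace.norm_eq, EuclideanSpace.norm_eq]
  congr 1
  refine Finset.sum_congr rfl (fun i _ => ?_)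
  have : Complex.normSq (f i) = Complex.normSq (g i) := h i
  simp only [vecN_apply]
  rw [Complex.sq_norm, Complex.sq_norm, this]

-- norm preservation under unimodular diagonal
lemma norm_vecN_diag (w : Fin K → ℂ) (hw : ∀ i, ‖w i‖ = 1) (f : Fin K → ℂ) :
    ‖vecN (Matrix.diagonal w *ᵥ f)‖ = ‖vecN f‖ := by
  refine norm_vecN_eq _ _ (fun i => ?_)
  have : (Matrix.diagonal w *ᵥ f) i = w i * f i := by
    simp [Matrix.mulVec_diagonal]
  rw [this, Complex.normSq_mul, normSq_one_of_norm_one (hw i), one_mul]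

lemma opNorm_conj_diag_le (w : Fin K → ℂ) (hw : ∀ i, ‖w i‖ = 1)
    (X : Matrix (Fin K) (Fin K) ℂ) :
    opNorm (star (Matrix.diagonal w) * X * Matrix.diagonal w) ≤ opNorm X := by
  have hsw : ∀ i, ‖(starRingEnd ℂ) (w i)‖ = 1 := by
    intro i; rw [RCLike.norm_conj]; exact hw i
  refine opNorm_le_of _ _ (norm_nonneg _) (fun f => ?_)
  have hstar : star (Matrix.diagonal w) = Matrix.diagonal (fun i => (starRingEnd ℂ) (w i)) := by
    rw [Matrix.star_eq_conjTranspose, Matrix.diagonal_conjTranspose]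
    rfl
  rw [hstar]
  rw [← Matrix.mulVec_mulVec, ← Matrix.mulVec_mulVec]
  rw [norm_vecN_diag _ hsw]
  calc ‖vecN (X *ᵥ (Matrix.diagonal w *ᵥ f))‖
      ≤ opNorm X * ‖vecN (Matrix.diagonal w *ᵥ f)‖ := norm_mulVec_le _ _
    _ = opNorm X * ‖vecN f‖ := by rw [norm_vecN_diag _ hw]

lemma opNorm_conj_diag (w : Fin K → ℂ) (hw : ∀ i, ‖w i‖ = 1)
    (X : Matrix (Fin K) (Fin K) ℂ) :
    opNorm (star (Matrix.diagonal w) * X * Matrix.diagonal w) = opNorm X := by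
  classical
  set D := Matrix.diagonal w with hD
  set w' : Fin K → ℂ := fun i => (starRingEnd ℂ) (w i) with hw'def
  have hw' : ∀ i, ‖w' i‖ = 1 := fun i => by rw [hw'def]; simp [RCLike.norm_conj, hw i]
  set D' := Matrix.diagonal w' with hD'
  have hstarD : star D = D' := by
    rw [hD, Matrix.star_eq_conjTranspose, Matrix.diagonal_conjTranspose]; rfl
  have hstarD' : star D' = D := by
    rw [hD', Matrix.star_eq_conjTranspose, Matrix.diagonal_conjTranspose]
    have : (star fun i => (starRingEnd ℂ) (w i)) = w := by
      funext i
      simp [Pi.star_apply]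
    rw [hw'def, this]
  have hDD' : D * D' = 1 := by
    rw [hD, hD', Matrix.diagonal_mul_diagonal, ← Matrix.diagonal_one]
    have : (fun i => w i * w' i) = fun _ => (1 : ℂ) := by
      funext i
      rw [hw'def]
      exact mul_conj_eq_one (hw i)
    rw [this]
  have hD'D : D' * D = 1 := by
    rw [hD, hD', Matrix.diagonal_mul_diagonal, ← Matrix.diagonal_one]
    have : (fun i => w' i * w i) = fun _ => (1 : ℂ) := by
      funext i
      rw [hw'def]
      exact conj_mul_eq_one (hw i)
    rw [this]
  refine le_antisymm (by rw [hstarD]; exact (by rw [← hstarD]; exact opNorm_conj_diag_le w hw X)) ?_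
  have hX : star D' * (star D * X * D) * D' = X := by
    rw [hstarD', hstarD]
    have e1 : D * (D' * X * D) * D' = (D * D') * X * (D * D') := by
      simp only [mul_assoc]
    rw [e1, hDD', one_mul, mul_one]
  have := opNorm_conj_diag_le w' hw' (star D * X * D)
  rw [hX] at this
  exact this

lemma pow_conj (U X : Matrix (Fin K) (Fin K) ℂ) (h1 : U * star U = 1)
    (h2 : star U * U = 1) (m : ℕ) :
    (star U * X * U) ^ m = star U * X ^ m * U := by
  have hUs : ∀ Z : Matrix (Fin K) (Fin K) ℂ, U * (star U * Z) = Z :=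
    fun Z => by rw [← mul_assoc, h1, one_mul]
  induction m with
  | zero => rw [pow_zero, pow_zero, mul_one, h2]
  | succ m ih =>
      rw [pow_succ, ih, pow_succ]
      simp only [mul_assoc, hUs]

lemma aeval_conj (U X : Matrix (Fin K) (Fin K) ℂ) (h1 : U * star U = 1)
    (h2 : star U * U = 1) (f : Polynomial ℂ) :
    aeval (star U * X * U) f = star U * (aeval X f) * U := by
  induction f using Polynomial.induction_on' with
  | add p q hp hq => rw [_root_.map_add, _root_.map_add, hp, hq, mul_add, add_mul]
  | monomial m c =>
      rw [aeval_monomial, aeval_monomial, pow_conj U X h1 h2 m]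
      simp only [Algebra.algebraMap_eq_smul_one, smul_mul_assoc, one_mul, mul_smul_comm]


lemma opNorm_nonneg (X : Matrix (Fin K) (Fin K) ℂ) : 0 ≤ opNorm X := norm_nonneg _

lemma opNorm_eq_zero_iff {X : Matrix (Fin K) (Fin K) ℂ} : opNorm X = 0 ↔ X = 0 := by
  unfold opNorm
  rw [norm_eq_zero]
  constructor
  · intro h
    apply EquivLike.injective (Matrix.toEuclideanCLM (𝕜 := ℂ) (n := Fin K))
    rw [map_zero]; exact h
  · intro h; rw [h, map_zero]

lemma coord_norm_le (f : Fin K → ℂ) (j : Fin K) : ‖f j‖ ≤ ‖vecN f‖ := by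
  have h1 : ‖f j‖ ^ 2 ≤ ‖vecN f‖ ^ 2 := by
    rw [norm_vecN_sq]
    have : Complex.normSq (f j) = ‖f j‖ ^ 2 := by
      rw [Complex.sq_norm]
    rw [← this]
    exact Finset.single_le_sum (f := fun i => Complex.normSq (f i))
      (fun i _ => Complex.normSq_nonneg _) (Finset.mem_univ j)
  nlinarith [norm_nonneg (vecN f), norm_nonneg (f j)]





-- (P1): powers of strictly upper triangular matrices
lemma sut_pow_eq_zero {X : Matrix (Fin K) (Fin K) ℂ}
    (hX : ∀ i j : Fin K, (j : ℕ) ≤ (i : ℕ) → X i j = 0) :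
    ∀ (m : ℕ) (i j : Fin K), (j : ℕ) < (i : ℕ) + m → (X ^ m) i j = 0 := by
  intro m
  induction m with
  | zero =>
      intro i j h
      rw [pow_zero]
      exact Matrix.one_apply_ne (fun hij => by rw [hij] at h; omega)
  | succ m ih =>
      intro i j h
      rw [pow_succ, Matrix.mul_apply]
      apply Finset.sum_eq_zero
      intro t _
      by_cases ht : (t : ℕ) < (i : ℕ) + m
      · rw [ih i t ht, zero_mul]
      · rw [hX t j (by omega), mul_zero]

lemma sut_pow_size_zero {X : Matrix (Fin K) (Fin K) ℂ}
    (hX : ∀ i j : Fin K, (j : ℕ) ≤ (i : ℕ) → X i j = 0) : X ^ K = 0 := by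
  ext i j
  rw [sut_pow_eq_zero hX K i j (by omega)]
  rfl

-- upper triangular: powers upper triangular, diagonal entries
lemma ut_pow_ut {X : Matrix (Fin K) (Fin K) ℂ}
    (hX : ∀ i j : Fin K, (j : ℕ) < (i : ℕ) → X i j = 0) :
    ∀ (m : ℕ) (i j : Fin K), (j : ℕ) < (i : ℕ) → (X ^ m) i j = 0 := by
  intro m
  induction m with
  | zero =>
      intro i j h
      rw [pow_zero]
      exact Matrix.one_apply_ne (fun hij => by rw [hij] at h; omega)
  | succ m ih =>
      intro i j h
      rw [pow_succ, Matrix.mul_apply]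
      apply Finset.sum_eq_zero
      intro t _
      by_cases ht : (t : ℕ) < (i : ℕ)
      · rw [ih i t ht, zero_mul]
      · rw [hX t j (by omega), mul_zero]

lemma ut_pow_diag {X : Matrix (Fin K) (Fin K) ℂ}
    (hX : ∀ i j : Fin K, (j : ℕ) < (i : ℕ) → X i j = 0) (m : ℕ) (i : Fin K) :
    (X ^ m) i i = (X i i) ^ m := by
  induction m with
  | zero => rw [pow_zero, pow_zero]; exact Matrix.one_apply_eq i
  | succ m ih =>
      rw [pow_succ, Matrix.mul_apply, pow_succ, ← ih]
      apply Finset.sum_eq_single i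
      · intro t _ hne
        by_cases ht : (t : ℕ) < (i : ℕ)
        · rw [ut_pow_ut hX m i t ht, zero_mul]
        · have : (i : ℕ) < (t : ℕ) := by
            rcases Nat.lt_or_ge (i : ℕ) (t : ℕ) with h' | h'
            · exact h'
            · exfalso; exact hne (Fin.ext (by omega))
          rw [hX t i this, mul_zero]
      · intro h; exact absurd (Finset.mem_univ i) h

-- recurrence for top-row entries along the diagonal strip
lemma sut_pow_succ_entry {X : Matrix (Fin K) (Fin K) ℂ}
    (hX : ∀ i j : Fin K, (j : ℕ) ≤ (i : ℕ) → X i j = 0) (m : ℕ) (h0 : 0 < K)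
    (hm : m + 1 < K) :
    (X ^ (m + 1)) ⟨0, h0⟩ ⟨m + 1, hm⟩ =
      (X ^ m) ⟨0, h0⟩ ⟨m, by omega⟩ * X ⟨m, by omega⟩ ⟨m + 1, hm⟩ := by
  rw [pow_succ, Matrix.mul_apply]
  apply Finset.sum_eq_single (⟨m, by omega⟩ : Fin K)
  · intro t _ hne
    by_cases ht : (t : ℕ) < m
    · rw [sut_pow_eq_zero hX m _ t (by simp; omega), zero_mul]
    · have : (m : ℕ) < (t : ℕ) := by
        rcases Nat.lt_or_ge (m : ℕ) (t : ℕ) with h' | h'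
        · exact h'
        · exfalso; exact hne (Fin.ext (by simp; omega))
      rw [hX t ⟨m + 1, hm⟩ (by simp; omega), mul_zero]
  · intro h; exact absurd (Finset.mem_univ _) h

lemma sut_pow_strip_ne {X : Matrix (Fin K) (Fin K) ℂ}
    (hX : ∀ i j : Fin K, (j : ℕ) ≤ (i : ℕ) → X i j = 0)
    (hsup : ∀ i j : Fin K, (i : ℕ) + 1 = (j : ℕ) → X i j ≠ 0) (h0 : 0 < K) :
    ∀ (m : ℕ) (hm : m < K), (X ^ m) ⟨0, h0⟩ ⟨m, hm⟩ ≠ 0 := by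
  intro m
  induction m with
  | zero =>
      intro hm
      rw [pow_zero]
      have : (⟨0, h0⟩ : Fin K) = ⟨0, hm⟩ := rfl
      rw [Matrix.one_apply_eq]
      exact one_ne_zero
  | succ m ih =>
      intro hm
      rw [sut_pow_succ_entry hX m h0 hm]
      exact mul_ne_zero (ih (by omega)) (hsup _ _ (by simp))

-- powers agree away from a column whose row is zero in both matrices
lemma pow_agree {X X' : Matrix (Fin K) (Fin K) ℂ} {l : Fin K}
    (hrowX : ∀ j, X l j = 0) (hrowX' : ∀ j, X' l j = 0)
    (hagree : ∀ i j, j ≠ l → X' i j = X i j) :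
    ∀ (m : ℕ) (i j : Fin K), j ≠ l → (X' ^ m) i j = (X ^ m) i j := by
  intro m
  induction m with
  | zero => intro i j _; rfl
  | succ m ih =>
      intro i j hj
      rw [pow_succ, pow_succ, Matrix.mul_apply, Matrix.mul_apply]
      apply Finset.sum_congr rfl
      intro t _
      by_cases ht : t = l
      · rw [ht, hrowX j, hrowX' j, mul_zero, mul_zero]
      · rw [ih i t ht, hagree t j hj]


-- std basis matrix facts
lemma mulVec_std_apply (i0 j0 : Fin K) (c : ℂ) (f : Fin K → ℂ) (i : Fin K) :
    ((Matrix.single i0 j0 c) *ᵥ f) i = if i0 = i then c * f j0 else 0 := by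
  rw [Matrix.mulVec, dotProduct]
  by_cases hi : i0 = i
  · simp only [Matrix.single, Matrix.of_apply, hi, true_and, if_pos]
    rw [Finset.sum_eq_single j0]
    · simp
    · intro b _ hb
      rw [if_neg (fun h => hb h.symm), zero_mul]
    · intro h; exact absurd (Finset.mem_univ _) h
  · simp only [Matrix.single, Matrix.of_apply, hi, false_and, if_false]
    apply Finset.sum_eq_zero
    intro b _
    rw [zero_mul]

lemma mulVec_std (i0 j0 : Fin K) (c : ℂ) (f : Fin K → ℂ) :
    (Matrix.single i0 j0 c) *ᵥ f = Pi.single i0 (c * f j0) := by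
  funext i
  rw [mulVec_std_apply]
  rw [Pi.single_apply]
  by_cases hi : i0 = i
  · rw [if_pos hi, if_pos hi.symm]
  · rw [if_neg hi, if_neg (fun h => hi h.symm)]

lemma norm_vecN_single (i0 : Fin K) (x : ℂ) : ‖vecN (Pi.single i0 x)‖ = ‖x‖ := by
  have h : vecN (Pi.single i0 x) = EuclideanSpace.single i0 x := rfl
  rw [h, EuclideanSpace.norm_single]

lemma opNorm_std (i0 j0 : Fin K) (c : ℂ) :
    opNorm (Matrix.single i0 j0 c) = ‖c‖ := by
  refine le_antisymm ?_ ?_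
  · refine opNorm_le_of _ _ (norm_nonneg _) (fun f => ?_)
    rw [mulVec_std, norm_vecN_single, norm_mul]
    exact mul_le_mul_of_nonneg_left (coord_norm_le f j0) (norm_nonneg _)
  · have h := norm_mulVec_le (Matrix.single i0 j0 c) (Pi.single j0 1)
    rw [mulVec_std, norm_vecN_single, norm_vecN_single] at h
    simp only [Pi.single_eq_same, mul_one, norm_one] at h
    exact h

-- two-variable Cauchy-Schwarz
lemma cs2 (a b x y : ℝ) (ha : 0 ≤ a) (hb : 0 ≤ b) (hx : 0 ≤ x) (hy : 0 ≤ y) :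
    a * x + b * y ≤ Real.sqrt (a ^ 2 + b ^ 2) * Real.sqrt (x ^ 2 + y ^ 2) := by
  have h1 : (a * x + b * y) ^ 2 ≤ (a ^ 2 + b ^ 2) * (x ^ 2 + y ^ 2) := by
    nlinarith [sq_nonneg (a * y - b * x)]
  have h2 : Real.sqrt ((a * x + b * y) ^ 2) ≤ Real.sqrt ((a ^ 2 + b ^ 2) * (x ^ 2 + y ^ 2)) :=
    Real.sqrt_le_sqrt h1
  rwa [Real.sqrt_sq (by positivity), Real.sqrt_mul (by positivity)] at h2

lemma norm_split (f : Fin K → ℂ) (l : Fin K) :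
    ‖vecN (Function.update f l 0)‖ ^ 2 + ‖f l‖ ^ 2 = ‖vecN f‖ ^ 2 := by
  rw [norm_vecN_sq, norm_vecN_sq]
  have h1 : ∑ i, Complex.normSq (Function.update f l 0 i)
      = ∑ i ∈ Finset.univ.erase l, Complex.normSq (f i) := by
    rw [← Finset.add_sum_erase _ _ (Finset.mem_univ l)]
    rw [Function.update_self, Complex.normSq_zero, zero_add]
    apply Finset.sum_congr rfl
    intro i hi
    rw [Function.update_of_ne (Finset.ne_of_mem_erase hi)]
  rw [h1]
  have h2 : ‖f l‖ ^ 2 = Complex.normSq (f l) := by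
    rw [Complex.sq_norm]
  rw [h2]
  rw [← Finset.add_sum_erase _ _ (Finset.mem_univ l)]
  ring

-- the norm sandwich for matrices that agree with P off the l-column
lemma sandwich (M P : Matrix (Fin K) (Fin K) ℂ) (l : Fin K)
    (hMP : ∀ f : Fin K → ℂ, f l = 0 → M *ᵥ f = P *ᵥ f) :
    ‖vecN (fun i => M i l)‖ ^ 2 ≤ (opNorm M) ^ 2 ∧
      (opNorm M) ^ 2 ≤ (opNorm P) ^ 2 + ‖vecN (fun i => M i l)‖ ^ 2 := by
  constructor
  · have h := norm_mulVec_le M (Pi.single l 1)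
    rw [norm_vecN_single, norm_one, mul_one] at h
    have hcol : M *ᵥ Pi.single l 1 = fun i => M i l := by
      rw [Matrix.mulVec_single]
      funext i; simp
    rw [hcol] at h
    have := pow_le_pow_left₀ (norm_nonneg _) h 2
    exact this
  · set V : Fin K → ℂ := fun i => M i l with hV
    have hle : opNorm M ≤ Real.sqrt ((opNorm P) ^ 2 + ‖vecN V‖ ^ 2) := by
      refine opNorm_le_of _ _ (Real.sqrt_nonneg _) (fun f => ?_)
      set f' := Function.update f l 0 with hf'
      set sgl : Fin K → ℂ := Pi.single l 1 with hsgl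
      have hfl : f' l = 0 := Function.update_self l 0 f
      have hdecomp : f = f' + f l • sgl := by
        funext i
        by_cases hi : i = l
        · subst hi
          simp only [Pi.add_apply, Pi.smul_apply, smul_eq_mul, hfl, zero_add, hsgl,
            Pi.single_eq_same, mul_one]
        · simp only [Pi.add_apply, Pi.smul_apply, smul_eq_mul, hf', hsgl,
            Function.update_of_ne hi, Pi.single_apply, if_neg hi, mul_zero, add_zero]
      have hMv : M *ᵥ f = (M *ᵥ f') + f l • (M *ᵥ sgl) := by
        conv_lhs => rw [hdecomp]
        rw [Matrix.mulVec_add, Matrix.mulVec_smul]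
      have hcol : M *ᵥ sgl = V := by
        rw [hsgl, Matrix.mulVec_single]
        funext i; simp [hV]
      have hnorm1 : ‖vecN (M *ᵥ f)‖ ≤ ‖vecN (M *ᵥ f')‖ + ‖f l‖ * ‖vecN V‖ := by
        rw [hMv, hcol]
        have hadd : vecN ((M *ᵥ f') + f l • V) = vecN (M *ᵥ f') + f l • vecN V := rfl
        rw [hadd]
        calc ‖vecN (M *ᵥ f') + f l • vecN V‖
            ≤ ‖vecN (M *ᵥ f')‖ + ‖f l • vecN V‖ := norm_add_le _ _
          _ = ‖vecN (M *ᵥ f')‖ + ‖f l‖ * ‖vecN V‖ := by rw [norm_smul]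
      have hnorm2 : ‖vecN (M *ᵥ f')‖ ≤ opNorm P * ‖vecN f'‖ := by
        rw [hMP f' hfl]
        exact norm_mulVec_le P f'
      have hcs : opNorm P * ‖vecN f'‖ + ‖f l‖ * ‖vecN V‖
          ≤ Real.sqrt ((opNorm P) ^ 2 + ‖vecN V‖ ^ 2)
            * Real.sqrt (‖vecN f'‖ ^ 2 + ‖f l‖ ^ 2) := by
        have := cs2 (opNorm P) (‖vecN V‖) (‖vecN f'‖) (‖f l‖)
          (norm_nonneg _) (norm_nonneg _) (norm_nonneg _) (norm_nonneg _)
        calc opNorm P * ‖vecN f'‖ + ‖f l‖ * ‖vecN V‖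
            = opNorm P * ‖vecN f'‖ + ‖vecN V‖ * ‖f l‖ := by ring
          _ ≤ _ := this
      have hsplit : ‖vecN f'‖ ^ 2 + ‖f l‖ ^ 2 = ‖vecN f‖ ^ 2 := norm_split f l
      calc ‖vecN (M *ᵥ f)‖ ≤ ‖vecN (M *ᵥ f')‖ + ‖f l‖ * ‖vecN V‖ := hnorm1
        _ ≤ opNorm P * ‖vecN f'‖ + ‖f l‖ * ‖vecN V‖ := by
            have := hnorm2; nlinarith [norm_nonneg (f l), norm_nonneg (vecN V)]
        _ ≤ Real.sqrt ((opNorm P) ^ 2 + ‖vecN V‖ ^ 2)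
            * Real.sqrt (‖vecN f'‖ ^ 2 + ‖f l‖ ^ 2) := hcs
        _ = Real.sqrt ((opNorm P) ^ 2 + ‖vecN V‖ ^ 2) * ‖vecN f‖ := by
            rw [hsplit, Real.sqrt_sq (norm_nonneg _)]
    have hsq := pow_le_pow_left₀ (norm_nonneg _) hle 2
    rwa [Real.sq_sqrt (by positivity)] at hsq

lemma std_apply {K : ℕ} (i0 l : Fin K) (c : ℂ) (i j : Fin K) :
    Matrix.single i0 l c i j = if i0 = i ∧ l = j then c else 0 := rfl

lemma core (N : ℕ) (B B' : Matrix (Fin (N+1)) (Fin (N+1)) ℂ)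
    (hB : ∀ i j : Fin (N+1), (j : ℕ) ≤ (i : ℕ) → B i j = 0)
    (hB' : ∀ i j : Fin (N+1), (j : ℕ) ≤ (i : ℕ) → B' i j = 0)
    (hsup : ∀ i j : Fin (N+1), (i : ℕ) + 1 = (j : ℕ) → B i j ≠ 0)
    (hagree : ∀ i j : Fin (N+1), (j : ℕ) < N → B' i j = B i j)
    (hnorm : ∀ g : Polynomial ℂ, opNorm (aeval B g) = opNorm (aeval B' g)) :
    ∃ u : ℂ, ‖u‖ = 1 ∧ ∀ i, B' i (Fin.last N) = u * B i (Fin.last N) := by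
  classical
  rcases Nat.eq_zero_or_pos N with hN0 | hNpos
  · subst hN0
    refine ⟨1, by norm_num, fun i => ?_⟩
    have hi : ((Fin.last 0 : Fin 1) : ℕ) ≤ (i : ℕ) := by omega
    rw [hB' i _ hi, hB i _ hi, mul_zero]
  set l : Fin (N+1) := Fin.last N with hl
  have hlv : (l : ℕ) = N := rfl
  set i0 : Fin (N+1) := ⟨0, by omega⟩ with hi0
  have hi0v : (i0 : ℕ) = 0 := rfl
  have hrowB : ∀ j, B l j = 0 := fun j => hB l j (by rw [hlv]; have := j.isLt; omega)
  have hrowB' : ∀ j, B' l j = 0 := fun j => hB' l j (by rw [hlv]; have := j.isLt; omega)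
  have hagree' : ∀ i j, j ≠ l → B' i j = B i j := by
    intro i j hj
    refine hagree i j ?_
    have := j.isLt
    rcases Nat.lt_or_ge (j : ℕ) N with h | h
    · exact h
    · exact absurd (Fin.ext (by omega)) hj
  set η := (B ^ N) i0 l with hη
  set η' := (B' ^ N) i0 l with hη'
  have hform : ∀ (X : Matrix (Fin (N+1)) (Fin (N+1)) ℂ),
      (∀ i j : Fin (N+1), (j : ℕ) ≤ (i : ℕ) → X i j = 0) →
      X ^ N = Matrix.single i0 l ((X ^ N) i0 l) := by
    intro X hX
    ext i j
    rw [std_apply]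
    by_cases h1 : i0 = i
    · by_cases h2 : l = j
      · rw [if_pos ⟨h1, h2⟩, ← h1, ← h2]
      · rw [if_neg (fun h => h2 h.2)]
        have hj : (j : ℕ) < N := by
          have := j.isLt
          rcases Nat.lt_or_ge (j : ℕ) N with h | h
          · exact h
          · exact absurd (Fin.ext (by rw [hlv]; omega)).symm h2
        have hiv : (i : ℕ) = 0 := by rw [← h1]
        exact sut_pow_eq_zero hX N i j (by omega)
    · rw [if_neg (fun h => h1 h.1)]
      have hiv : 1 ≤ (i : ℕ) := by
        by_contra h
        exact h1 (Fin.ext (by rw [hi0v]; omega))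
      have := j.isLt
      exact sut_pow_eq_zero hX N i j (by omega)
  have hBN : B ^ N = Matrix.single i0 l η := hform B hB
  have hB'N : B' ^ N = Matrix.single i0 l η' := hform B' hB'
  have hηnorm : ‖η‖ = ‖η'‖ := by
    have h := hnorm (X ^ N : Polynomial ℂ)
    rw [map_pow, aeval_X, map_pow, aeval_X, hBN, hB'N, opNorm_std, opNorm_std] at h
    exact h
  have hηne : η ≠ 0 := by
    have h := sut_pow_strip_ne hB hsup (by omega) N (by omega)
    have : (⟨N, by omega⟩ : Fin (N+1)) = l := Fin.ext (by simp [hlv])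
    rw [this] at h
    exact h
  have hη'ne : η' ≠ 0 := by
    intro h
    rw [h, norm_zero] at hηnorm
    exact hηne (norm_eq_zero.mp hηnorm)
  have hnsq : Complex.normSq η = Complex.normSq η' := by
    rw [Complex.normSq_eq_norm_sq, Complex.normSq_eq_norm_sq, hηnorm]
  -- Step 2 : the key relations
  have hrel : ∀ m : ℕ,
      (B ^ m) i0 l * (starRingEnd ℂ) η = (B' ^ m) i0 l * (starRingEnd ℂ) η' := by
    intro m
    set a : Fin (N+1) → ℂ := fun i => (B ^ m) i l with ha
    set a' : Fin (N+1) → ℂ := fun i => (B' ^ m) i l with ha'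
    set c₀ := opNorm (B ^ m) with hc₀
    set c₀' := opNorm (B' ^ m) with hc₀'
    set δ := a i0 * (starRingEnd ℂ) η - a' i0 * (starRingEnd ℂ) η' with hδ
    suffices hsuff : δ = 0 by
      have h := sub_eq_zero.mp hsuff
      exact h
    by_contra hδne
    set Sa := ∑ i ∈ Finset.univ.erase i0, Complex.normSq (a i) with hSa
    set Sa' := ∑ i ∈ Finset.univ.erase i0, Complex.normSq (a' i) with hSa'
    have key : ∀ z : ℂ,
        Complex.normSq (a i0 + z * η) + Sa
          ≤ Complex.normSq (a' i0 + z * η') + Sa' + c₀' ^ 2 := by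
      intro z
      set Mz := B ^ m + z • B ^ N with hMz
      set Mz' := B' ^ m + z • B' ^ N with hMz'
      have heval : (aeval B) ((X : Polynomial ℂ) ^ m + C z * X ^ N) = Mz := by
        rw [map_add, _root_.map_mul, aeval_C, map_pow, map_pow, aeval_X, ← Algebra.smul_def]
      have heval' : (aeval B') ((X : Polynomial ℂ) ^ m + C z * X ^ N) = Mz' := by
        rw [map_add, _root_.map_mul, aeval_C, map_pow, map_pow, aeval_X, ← Algebra.smul_def]
      have hne : opNorm Mz = opNorm Mz' := by
        rw [← heval, ← heval']
        exact hnorm _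
      have hMP : ∀ f : Fin (N+1) → ℂ, f l = 0 → Mz *ᵥ f = (B ^ m) *ᵥ f := by
        intro f hf
        rw [hMz, Matrix.add_mulVec, Matrix.smul_mulVec, hBN, mulVec_std, hf,
          mul_zero]
        rw [Pi.single_zero, smul_zero, add_zero]
      have hMP' : ∀ f : Fin (N+1) → ℂ, f l = 0 → Mz' *ᵥ f = (B' ^ m) *ᵥ f := by
        intro f hf
        rw [hMz', Matrix.add_mulVec, Matrix.smul_mulVec, hB'N, mulVec_std, hf,
          mul_zero]
        rw [Pi.single_zero, smul_zero, add_zero]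
      have hs := sandwich Mz (B ^ m) l hMP
      have hs' := sandwich Mz' (B' ^ m) l hMP'
      have hexp : ‖vecN (fun i => Mz i l)‖ ^ 2 = Complex.normSq (a i0 + z * η) + Sa := by
        rw [norm_vecN_sq]
        have hb : (∑ i, Complex.normSq ((fun i => Mz i l) i))
            = ∑ i, Complex.normSq (Mz i l) := rfl
        rw [hb, ← Finset.add_sum_erase _ (fun i => Complex.normSq (Mz i l))
          (Finset.mem_univ i0)]
        have h1 : Complex.normSq (Mz i0 l) = Complex.normSq (a i0 + z * η) := by
          have hentry : Mz i0 l = a i0 + z * η := by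
            rw [hMz, Matrix.add_apply, Matrix.smul_apply, smul_eq_mul, ha]
          rw [hentry]
        have h2 : ∑ i ∈ Finset.univ.erase i0, Complex.normSq (Mz i l) = Sa := by
          rw [hSa]
          apply Finset.sum_congr rfl
          intro i hi
          have hii0 : ¬(i0 = i) := fun h => (Finset.ne_of_mem_erase hi) h.symm
          have hentry : Mz i l = a i := by
            rw [hMz, Matrix.add_apply, Matrix.smul_apply, hBN, std_apply,
              if_neg (fun h => hii0 h.1), smul_zero, add_zero, ha]
          rw [hentry]
        rw [h1, h2]
      have hexp' : ‖vecN (fun i => Mz' i l)‖ ^ 2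
          = Complex.normSq (a' i0 + z * η') + Sa' := by
        rw [norm_vecN_sq]
        have hb : (∑ i, Complex.normSq ((fun i => Mz' i l) i))
            = ∑ i, Complex.normSq (Mz' i l) := rfl
        rw [hb, ← Finset.add_sum_erase _ (fun i => Complex.normSq (Mz' i l))
          (Finset.mem_univ i0)]
        have h1 : Complex.normSq (Mz' i0 l) = Complex.normSq (a' i0 + z * η') := by
          have hentry : Mz' i0 l = a' i0 + z * η' := by
            rw [hMz', Matrix.add_apply, Matrix.smul_apply, smul_eq_mul, ha']
          rw [hentry]
        have h2 : ∑ i ∈ Finset.univ.erase i0, Complex.normSq (Mz' i l) = Sa' := by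
          rw [hSa']
          apply Finset.sum_congr rfl
          intro i hi
          have hii0 : ¬(i0 = i) := fun h => (Finset.ne_of_mem_erase hi) h.symm
          have hentry : Mz' i l = a' i := by
            rw [hMz', Matrix.add_apply, Matrix.smul_apply, hB'N, std_apply,
              if_neg (fun h => hii0 h.1), smul_zero, add_zero, ha']
          rw [hentry]
        rw [h1, h2]
      calc Complex.normSq (a i0 + z * η) + Sa = ‖vecN (fun i => Mz i l)‖ ^ 2 := hexp.symm
        _ ≤ (opNorm Mz) ^ 2 := hs.1
        _ = (opNorm Mz') ^ 2 := by rw [hne]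
        _ ≤ (opNorm (B' ^ m)) ^ 2 + ‖vecN (fun i => Mz' i l)‖ ^ 2 := hs'.2
        _ = Complex.normSq (a' i0 + z * η') + Sa' + c₀' ^ 2 := by rw [hexp', hc₀']; ring
    -- expansion of the difference
    have hdiff : ∀ z : ℂ,
        (Complex.normSq (a i0 + z * η) + Sa)
          - (Complex.normSq (a' i0 + z * η') + Sa')
        = (Sa - Sa' + Complex.normSq (a i0) - Complex.normSq (a' i0))
            + 2 * (δ * (starRingEnd ℂ) z).re := by
      intro z
      rw [Complex.normSq_add, Complex.normSq_add, Complex.normSq_mul, Complex.normSq_mul,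
        hnsq]
      have e1 : a i0 * (starRingEnd ℂ) (z * η)
          = (a i0 * (starRingEnd ℂ) η) * (starRingEnd ℂ) z := by
        rw [_root_.map_mul]; ring
      have e2 : a' i0 * (starRingEnd ℂ) (z * η')
          = (a' i0 * (starRingEnd ℂ) η') * (starRingEnd ℂ) z := by
        rw [_root_.map_mul]; ring
      rw [e1, e2]
      have e3 : (δ * (starRingEnd ℂ) z).re
          = ((a i0 * (starRingEnd ℂ) η) * (starRingEnd ℂ) z).re
            - ((a' i0 * (starRingEnd ℂ) η') * (starRingEnd ℂ) z).re := by
        rw [hδ, sub_mul, Complex.sub_re]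
      rw [e3]
      ring
    have hδpos : 0 < Complex.normSq δ := Complex.normSq_pos.mpr hδne
    set Cst := Sa - Sa' + Complex.normSq (a i0) - Complex.normSq (a' i0) with hCst
    set t : ℝ := (c₀ ^ 2 + c₀' ^ 2 + |Cst| + 1) / (2 * Complex.normSq δ) with ht
    have hre : (δ * (starRingEnd ℂ) ((t : ℂ) * δ)).re = t * Complex.normSq δ := by
      rw [_root_.map_mul, Complex.conj_ofReal]
      have e : δ * ((t : ℂ) * (starRingEnd ℂ) δ) = (t : ℂ) * (δ * (starRingEnd ℂ) δ) := by
        ring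
      rw [e, Complex.mul_conj, ← Complex.ofReal_mul, Complex.ofReal_re]
    have hk := key ((t : ℂ) * δ)
    have hd := hdiff ((t : ℂ) * δ)
    rw [hre] at hd
    have h2t : 2 * (t * Complex.normSq δ) = c₀ ^ 2 + c₀' ^ 2 + |Cst| + 1 := by
      rw [ht]
      field_simp
    have hc₀nn : 0 ≤ c₀ := opNorm_nonneg _
    nlinarith [neg_abs_le Cst, abs_nonneg Cst, sq_nonneg c₀]
  -- Step 3 : downward induction over the column entries
  have claim : ∀ d : ℕ, d ≤ N → ∀ r : Fin (N+1), N - d ≤ (r : ℕ) →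
      B' r l * (starRingEnd ℂ) η' = B r l * (starRingEnd ℂ) η := by
    intro d
    induction d with
    | zero =>
        intro _ r hr
        have hrN : (r : ℕ) = N := by
          have := r.isLt
          omega
        have hrl : r = l := Fin.ext (by rw [hrN, hlv])
        rw [hrl, hB l l (le_refl _), hB' l l (le_refl _), zero_mul, zero_mul]
    | succ d ih =>
        intro hd r hr
        by_cases hcase : N - d ≤ (r : ℕ)
        · exact ih (by omega) r hcase
        · have hrval : (r : ℕ) + 1 = N - d := by omega
          have hrm := hrel (N - d)
          have hpow : B ^ (N - d) = B ^ (r : ℕ) * B := by rw [← hrval, pow_succ]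
          have hpow' : B' ^ (N - d) = B' ^ (r : ℕ) * B' := by rw [← hrval, pow_succ]
          set F : Fin (N+1) → ℂ :=
            fun s => (B ^ (r : ℕ)) i0 s * (B s l * (starRingEnd ℂ) η) with hF
          set F' : Fin (N+1) → ℂ :=
            fun s => (B' ^ (r : ℕ)) i0 s * (B' s l * (starRingEnd ℂ) η') with hF'
          have hsum : ∑ s, F s = ∑ s, F' s := by
            have e1 : ∑ s, F s = (B ^ (N - d)) i0 l * (starRingEnd ℂ) η := by
              rw [hpow, Matrix.mul_apply, Finset.sum_mul]
              apply Finset.sum_congr rfl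
              intro s _
              rw [hF, mul_assoc]
            have e2 : ∑ s, F' s = (B' ^ (N - d)) i0 l * (starRingEnd ℂ) η' := by
              rw [hpow', Matrix.mul_apply, Finset.sum_mul]
              apply Finset.sum_congr rfl
              intro s _
              rw [hF', mul_assoc]
            rw [e1, e2, hrm]
          have hFt : ∀ s, s ≠ r → F s = F' s := by
            intro s hs
            by_cases h1 : (s : ℕ) < (r : ℕ)
            · simp only [hF, hF', sut_pow_eq_zero hB (r : ℕ) i0 s (by omega),
                sut_pow_eq_zero hB' (r : ℕ) i0 s (by omega), zero_mul]
            · by_cases h2 : s = l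
              · simp only [hF, hF', h2, hrowB, hrowB', zero_mul, mul_zero]
              · have hsr : (r : ℕ) < (s : ℕ) := by
                  have : (s : ℕ) ≠ (r : ℕ) := fun h => hs (Fin.ext h)
                  omega
                have hcoeff : (B' ^ (r : ℕ)) i0 s = (B ^ (r : ℕ)) i0 s :=
                  pow_agree hrowB hrowB' hagree' (r : ℕ) i0 s h2
                have hinner : B' s l * (starRingEnd ℂ) η' = B s l * (starRingEnd ℂ) η :=
                  ih (by omega) s (by omega)
                simp only [hF, hF', hcoeff, hinner]
          have hFr : F r = F' r := by
            have hz : ∑ s, (F s - F' s) = 0 := by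
              rw [Finset.sum_sub_distrib, hsum, sub_self]
            have h2 : ∑ s, (F s - F' s) = F r - F' r := by
              apply Finset.sum_eq_single r
              · intro s _ hsr
                rw [hFt s hsr, sub_self]
              · intro h; exact absurd (Finset.mem_univ _) h
            rw [h2] at hz
            exact sub_eq_zero.mp hz
          have hrll : r ≠ l := by
            intro h
            have : (r : ℕ) = N := by rw [h]; exact hlv
            omega
          have hζ : (B ^ (r : ℕ)) i0 r ≠ 0 := by
            have h := sut_pow_strip_ne hB hsup (by omega) (r : ℕ) r.isLt
            have he : (⟨(r : ℕ), r.isLt⟩ : Fin (N+1)) = r := Fin.eta r r.isLt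
            rw [he] at h
            exact h
          have hcoeffr : (B' ^ (r : ℕ)) i0 r = (B ^ (r : ℕ)) i0 r :=
            pow_agree hrowB hrowB' hagree' (r : ℕ) i0 r hrll
          simp only [hF, hF', hcoeffr] at hFr
          exact (mul_left_cancel₀ hζ hFr).symm
  have hcne : (starRingEnd ℂ) η' ≠ 0 := by
    simpa using hη'ne
  refine ⟨(starRingEnd ℂ) η / (starRingEnd ℂ) η', ?_, ?_⟩
  · rw [norm_div, RCLike.norm_conj, RCLike.norm_conj, hηnorm, div_self]
    rw [norm_ne_zero_iff]
    exact hη'ne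
  · intro i
    have h := claim N (le_refl N) i (by omega)
    rw [div_mul_eq_mul_div, eq_div_iff hcne]
    calc B' i l * (starRingEnd ℂ) η' = B i l * (starRingEnd ℂ) η := h
      _ = (starRingEnd ℂ) η * B i l := by ring

lemma norm_one_of_conj_mul {z : ℂ} (h : (starRingEnd ℂ) z * z = 1) : ‖z‖ = 1 := by
  have h2 : Complex.normSq z = 1 := by
    have : ((Complex.normSq z : ℝ) : ℂ) = 1 := by
      rw [← Complex.mul_conj z, mul_comm]
      exact h
    exact_mod_cast this
  have h3 : ‖z‖ ^ 2 = 1 := by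
    rw [Complex.sq_norm, h2]
  nlinarith [norm_nonneg z]

lemma star_diagonal (v : Fin K → ℂ) :
    star (Matrix.diagonal v) = Matrix.diagonal (fun i => (starRingEnd ℂ) (v i)) := by
  rw [Matrix.star_eq_conjTranspose, Matrix.diagonal_conjTranspose]
  rfl

lemma diag_unitary (v : Fin K → ℂ) (hv : ∀ i, ‖v i‖ = 1) :
    Matrix.diagonal v * star (Matrix.diagonal v) = 1 ∧
      star (Matrix.diagonal v) * Matrix.diagonal v = 1 := by
  rw [star_diagonal, Matrix.diagonal_mul_diagonal, Matrix.diagonal_mul_diagonal]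
  constructor
  · rw [← Matrix.diagonal_one]
    have : (fun i => v i * (starRingEnd ℂ) (v i)) = fun _ => (1 : ℂ) := by
      funext i; exact mul_conj_eq_one (hv i)
    rw [this]
  · rw [← Matrix.diagonal_one]
    have : (fun i => (starRingEnd ℂ) (v i) * v i) = fun _ => (1 : ℂ) := by
      funext i; exact conj_mul_eq_one (hv i)
    rw [this]

lemma conj_diag_apply (v : Fin K → ℂ) (M : Matrix (Fin K) (Fin K) ℂ) (i j : Fin K) :
    (star (Matrix.diagonal v) * M * Matrix.diagonal v) i j
      = (starRingEnd ℂ) (v i) * M i j * v j := by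
  rw [star_diagonal, Matrix.mul_diagonal, Matrix.diagonal_mul]

end UniqHelp

open UniqHelp

/-- Let `A` be upper triangular with constant diagonal and nonzero first superdiagonal.
For an upper triangular `A'`, the following are equivalent: (1) the leading principal
submatrices of `A` and `A'` satisfy `‖f(A_i)‖ = ‖f(A'_i)‖` for all polynomials `f`
and all `1 ≤ i ≤ n`; (2) `A' = W* A W` for some diagonal unitary `W`. -/
theorem unitary_similarity_of_leading_submatrix_norms
    (n : ℕ) (hn : 1 ≤ n)
    (A A' : Matrix (Fin n) (Fin n) ℂ)
    (hA_triangular : ∀ i j : Fin n, (j : ℕ) < (i : ℕ) → A i j = 0)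
    (hA_diag : ∀ i k : Fin n, A i i = A k k)
    (hA_super : ∀ i j : Fin n, (i : ℕ) + 1 = (j : ℕ) → A i j ≠ 0)
    (hA'_triangular : ∀ i j : Fin n, (j : ℕ) < (i : ℕ) → A' i j = 0) :
    (∀ (k : ℕ) (hk1 : 1 ≤ k) (hkn : k ≤ n) (f : Polynomial ℂ),
        opNorm (aeval (leadingSubmatrix A k hkn) f) =
          opNorm (aeval (leadingSubmatrix A' k hkn) f)) ↔
    (∃ W : Matrix (Fin n) (Fin n) ℂ, W ∈ Matrix.unitaryGroup (Fin n) ℂ ∧ W.IsDiag ∧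
        A' = star W * A * W) := by
  classical
  have hL : ∀ (X : Matrix (Fin n) (Fin n) ℂ) (k : ℕ) (hk : k ≤ n) (i j : Fin k),
      leadingSubmatrix X k hk i j = X (Fin.castLE hk i) (Fin.castLE hk j) := by
    intro X k hk i j; rfl
  constructor
  · intro h1
    set lam := A ⟨0, by omega⟩ ⟨0, by omega⟩ with hlam
    have hAdiag : ∀ i : Fin n, A i i = lam := fun i => hA_diag i ⟨0, by omega⟩
    have hLA : leadingSubmatrix A n (le_refl n) = A := by
      ext i j; rw [hL, Fin.castLE_rfl]; rfl
    have hLA' : leadingSubmatrix A' n (le_refl n) = A' := by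
      ext i j; rw [hL, Fin.castLE_rfl]; rfl
    -- A' has constant diagonal lam
    have hA'diag : ∀ i : Fin n, A' i i = lam := by
      have hnorm0 := h1 n hn (le_refl n) ((X - C lam) ^ n)
      rw [hLA, hLA'] at hnorm0
      have hAsut : ∀ i j : Fin n, (j : ℕ) ≤ (i : ℕ) → (A - lam • 1) i j = 0 := by
        intro i j hij
        rw [Matrix.sub_apply, Matrix.smul_apply]
        by_cases hji : i = j
        · subst hji
          rw [Matrix.one_apply_eq, hAdiag i, smul_eq_mul, mul_one, sub_self]
        · have : (j : ℕ) < (i : ℕ) := by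
            rcases Nat.lt_or_ge (j : ℕ) (i : ℕ) with h | h
            · exact h
            · exact absurd (Fin.ext (by omega)) hji
          rw [hA_triangular i j this, Matrix.one_apply_ne hji, smul_zero, sub_zero]
      have hev : ∀ Y : Matrix (Fin n) (Fin n) ℂ,
          aeval Y ((X - C lam) ^ n) = (Y - lam • 1) ^ n := by
        intro Y
        rw [map_pow, map_sub, aeval_X, aeval_C, Algebra.algebraMap_eq_smul_one]
      rw [hev, hev, sut_pow_size_zero hAsut] at hnorm0
      have h0 : opNorm (0 : Matrix (Fin n) (Fin n) ℂ) = 0 := opNorm_eq_zero_iff.mpr rfl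
      rw [h0] at hnorm0
      have hz' : (A' - lam • 1) ^ n = 0 := opNorm_eq_zero_iff.mp hnorm0.symm
      intro i
      have hUT : ∀ i j : Fin n, (j : ℕ) < (i : ℕ) → (A' - lam • 1) i j = 0 := by
        intro i j hij
        have hji : i ≠ j := fun h => by rw [h] at hij; omega
        rw [Matrix.sub_apply, Matrix.smul_apply, hA'_triangular i j hij,
          Matrix.one_apply_ne hji, smul_zero, sub_zero]
      have hdiag := ut_pow_diag hUT n i
      rw [hz'] at hdiag
      have : ((A' - lam • 1) i i) ^ n = 0 := by
        rw [← hdiag]; rfl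
      have h2 : (A' - lam • 1) i i = 0 := pow_eq_zero_iff (by omega) |>.mp this
      rw [Matrix.sub_apply, Matrix.smul_apply, Matrix.one_apply_eq, smul_eq_mul, mul_one,
        sub_eq_zero] at h2
      exact h2
    -- the main induction on k
    have main : ∀ k : ℕ, k ≤ n → ∃ w : Fin n → ℂ, (∀ i, ‖w i‖ = 1) ∧
        (∀ i j : Fin n, (j : ℕ) < k →
          A' i j = (starRingEnd ℂ) (w i) * w j * A i j) := by
      intro k
      induction k with
      | zero =>
          intro _
          exact ⟨fun _ => 1, fun i => by norm_num, fun i j h => absurd h (by omega)⟩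
      | succ k ih =>
          intro hkn
          obtain ⟨w, hw1, hw2⟩ := ih (by omega)
          set LA := leadingSubmatrix A (k + 1) hkn with hLAdef
          set LA' := leadingSubmatrix A' (k + 1) hkn with hLA'def
          set Bm : Matrix (Fin (k + 1)) (Fin (k + 1)) ℂ := LA - lam • 1 with hBmdef
          set Mm' : Matrix (Fin (k + 1)) (Fin (k + 1)) ℂ := LA' - lam • 1 with hMm'def
          set wd : Fin (k + 1) → ℂ :=
            fun i => if (i : ℕ) < k then w (Fin.castLE hkn i) else 1 with hwd
          have hwd1 : ∀ i, ‖wd i‖ = 1 := by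
            intro i
            rw [hwd]
            by_cases h : (i : ℕ) < k
            · simp only [h, if_true]; exact hw1 _
            · simp only [h, if_false]; norm_num
          set cwd : Fin (k + 1) → ℂ := fun i => (starRingEnd ℂ) (wd i) with hcwd
          have hcwd1 : ∀ i, ‖cwd i‖ = 1 := by
            intro i; rw [hcwd, RCLike.norm_conj]; exact hwd1 i
          set E := Matrix.diagonal cwd with hE
          set Bm' : Matrix (Fin (k + 1)) (Fin (k + 1)) ℂ := star E * Mm' * E with hBm'def
          have hBm'apply : ∀ i j, Bm' i j = wd i * Mm' i j * (starRingEnd ℂ) (wd j) := by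
            intro i j
            rw [hBm'def, hE, conj_diag_apply]
            rw [hcwd]
            simp only [Complex.conj_conj]
          -- entries of Bm
          have hBmapply : ∀ i j : Fin (k + 1),
              Bm i j = A (Fin.castLE hkn i) (Fin.castLE hkn j)
                - lam * (1 : Matrix (Fin (k+1)) (Fin (k+1)) ℂ) i j := by
            intro i j
            rw [hBmdef, Matrix.sub_apply, Matrix.smul_apply, smul_eq_mul, hLAdef, hL]
          have hMm'apply : ∀ i j : Fin (k + 1),
              Mm' i j = A' (Fin.castLE hkn i) (Fin.castLE hkn j)
                - lam * (1 : Matrix (Fin (k+1)) (Fin (k+1)) ℂ) i j := by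
            intro i j
            rw [hMm'def, Matrix.sub_apply, Matrix.smul_apply, smul_eq_mul, hLA'def, hL]
          have hcastv : ∀ i : Fin (k + 1), ((Fin.castLE hkn i : Fin n) : ℕ) = (i : ℕ) :=
            fun i => rfl
          -- strict upper triangularity of Bm
          have hBc : ∀ i j : Fin (k + 1), (j : ℕ) ≤ (i : ℕ) → Bm i j = 0 := by
            intro i j hij
            rw [hBmapply]
            by_cases hji : i = j
            · subst hji
              rw [Matrix.one_apply_eq, hAdiag, mul_one, sub_self]
            · have hlt : (j : ℕ) < (i : ℕ) := by
                rcases Nat.lt_or_ge (j : ℕ) (i : ℕ) with h | h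
                · exact h
                · exact absurd (Fin.ext (by omega)) hji
              rw [hA_triangular _ _ (by rw [hcastv, hcastv]; exact hlt),
                Matrix.one_apply_ne hji, mul_zero, sub_zero]
          have hMc' : ∀ i j : Fin (k + 1), (j : ℕ) ≤ (i : ℕ) → Mm' i j = 0 := by
            intro i j hij
            rw [hMm'apply]
            by_cases hji : i = j
            · subst hji
              rw [Matrix.one_apply_eq, hA'diag, mul_one, sub_self]
            · have hlt : (j : ℕ) < (i : ℕ) := by
                rcases Nat.lt_or_ge (j : ℕ) (i : ℕ) with h | h
                · exact h
                · exact absurd (Fin.ext (by omega)) hji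
              rw [hA'_triangular _ _ (by rw [hcastv, hcastv]; exact hlt),
                Matrix.one_apply_ne hji, mul_zero, sub_zero]
          have hBc' : ∀ i j : Fin (k + 1), (j : ℕ) ≤ (i : ℕ) → Bm' i j = 0 := by
            intro i j hij
            rw [hBm'apply, hMc' i j hij, mul_zero, zero_mul]
          have hsupc : ∀ i j : Fin (k + 1), (i : ℕ) + 1 = (j : ℕ) → Bm i j ≠ 0 := by
            intro i j hij
            have hji : i ≠ j := fun h => by rw [h] at hij; omega
            rw [hBmapply, Matrix.one_apply_ne hji, mul_zero, sub_zero]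
            exact hA_super _ _ (by rw [hcastv, hcastv]; exact hij)
          have hagreec : ∀ i j : Fin (k + 1), (j : ℕ) < k → Bm' i j = Bm i j := by
            intro i j hjk
            by_cases hij : (j : ℕ) ≤ (i : ℕ)
            · rw [hBc' i j hij, hBc i j hij]
            · have hij2 : (i : ℕ) < (j : ℕ) := by omega
              have hik : (i : ℕ) < k := by omega
              have hji : i ≠ j := fun h => by rw [h] at hij2; omega
              have e1 : wd i = w (Fin.castLE hkn i) := by
                simp only [hwd]; rw [if_pos hik]
              have e2 : wd j = w (Fin.castLE hkn j) := by
                simp only [hwd]; rw [if_pos hjk]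
              have hA'e := hw2 (Fin.castLE hkn i) (Fin.castLE hkn j)
                (by rw [hcastv]; exact hjk)
              rw [hBm'apply, hMm'apply, Matrix.one_apply_ne hji, mul_zero, sub_zero,
                hBmapply, Matrix.one_apply_ne hji, mul_zero, sub_zero, hA'e, e1, e2]
              set wi := w (Fin.castLE hkn i)
              set wj := w (Fin.castLE hkn j)
              have hwi : wi * (starRingEnd ℂ) wi = 1 := mul_conj_eq_one (hw1 _)
              have hwj : wj * (starRingEnd ℂ) wj = 1 := mul_conj_eq_one (hw1 _)
              calc wi * ((starRingEnd ℂ) wi * wj * A (Fin.castLE hkn i) (Fin.castLE hkn j))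
                    * (starRingEnd ℂ) wj
                  = (wi * (starRingEnd ℂ) wi) * (wj * (starRingEnd ℂ) wj)
                    * A (Fin.castLE hkn i) (Fin.castLE hkn j) := by ring
                _ = A (Fin.castLE hkn i) (Fin.castLE hkn j) := by
                    rw [hwi, hwj, one_mul, one_mul]
          -- norm transfer
          have hEU := diag_unitary cwd hcwd1
          have hnormc : ∀ g : Polynomial ℂ, opNorm (aeval Bm g) = opNorm (aeval Bm' g) := by
            intro g
            have hcomp : ∀ Y : Matrix (Fin (k+1)) (Fin (k+1)) ℂ,
                aeval Y (g.comp (X - C lam)) = aeval (Y - lam • 1) g := by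
              intro Y
              rw [Polynomial.aeval_comp, map_sub, aeval_X, aeval_C,
                Algebra.algebraMap_eq_smul_one]
            have h1c := h1 (k + 1) (by omega) hkn (g.comp (X - C lam))
            rw [hcomp LA, hcomp LA'] at h1c
            rw [← hBmdef, ← hMm'def] at h1c
            rw [h1c]
            rw [hBm'def, hE, aeval_conj _ _ hEU.1 hEU.2 g, ← hE]
            rw [hE, opNorm_conj_diag cwd hcwd1]
          obtain ⟨u, hu1, hu2⟩ := core k Bm Bm' hBc hBc' hsupc hagreec hnormc
          -- assemble the new w
          refine ⟨fun t => if (t : ℕ) < k then w t else if (t : ℕ) = k then u else 1,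
            ?_, ?_⟩
          · intro i
            show ‖if (i : ℕ) < k then w i else if (i : ℕ) = k then u else 1‖ = 1
            by_cases h : (i : ℕ) < k
            · rw [if_pos h]; exact hw1 i
            · by_cases h2 : (i : ℕ) = k
              · rw [if_neg h, if_pos h2]; exact hu1
              · rw [if_neg h, if_neg h2]; norm_num
          · intro i j hj
            show A' i j = (starRingEnd ℂ)
                (if (i : ℕ) < k then w i else if (i : ℕ) = k then u else 1)
              * (if (j : ℕ) < k then w j else if (j : ℕ) = k then u else 1) * A i j
            by_cases hjk : (j : ℕ) < k
            · by_cases hik : (i : ℕ) < k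
              · rw [if_pos hik, if_pos hjk]
                exact hw2 i j hjk
              · have hlt : (j : ℕ) < (i : ℕ) := by omega
                rw [hA'_triangular i j hlt, hA_triangular i j hlt, mul_zero]
            · have hjk2 : (j : ℕ) = k := by omega
              by_cases hik : (i : ℕ) < k + 1
              · by_cases hik2 : (i : ℕ) < k
                · -- use the core conclusion
                  set I : Fin (k + 1) := ⟨(i : ℕ), hik⟩ with hI
                  have hInl : I ≠ Fin.last k := by
                    intro h
                    have h2 : (I : ℕ) = k := by rw [h]; rfl
                    rw [hI] at h2
                    simp at h2
                    omega
                  have hlast := hu2 I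
                  have hcastI : Fin.castLE hkn I = i := Fin.ext rfl
                  have hcastL : Fin.castLE hkn (Fin.last k) = j := Fin.ext (by
                    have : ((Fin.castLE hkn (Fin.last k) : Fin n) : ℕ) = k := rfl
                    rw [this, hjk2])
                  have hMme : Mm' I (Fin.last k) = A' i j := by
                    rw [hMm'apply, Matrix.one_apply_ne hInl, mul_zero, sub_zero,
                      hcastI, hcastL]
                  have hBme : Bm I (Fin.last k) = A i j := by
                    rw [hBmapply, Matrix.one_apply_ne hInl, mul_zero, sub_zero,
                      hcastI, hcastL]
                  have hwdI : wd I = w i := by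
                    simp only [hwd]
                    rw [if_pos (show ((I : Fin (k+1)) : ℕ) < k from hik2)]
                    exact congrArg w hcastI
                  have hwdL : wd (Fin.last k) = 1 := by
                    simp only [hwd]
                    rw [if_neg (show ¬((Fin.last k : Fin (k+1)) : ℕ) < k by simp)]
                  rw [hBm'apply, hMme, hwdI, hwdL, _root_.map_one, mul_one, hBme] at hlast
                  rw [if_pos hik2, if_neg hjk, if_pos hjk2]
                  calc A' i j = ((starRingEnd ℂ) (w i) * w i) * A' i j := by
                        rw [conj_mul_eq_one (hw1 i), one_mul]
                    _ = (starRingEnd ℂ) (w i) * (w i * A' i j) := by ring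
                    _ = (starRingEnd ℂ) (w i) * (u * A i j) := by rw [hlast]
                    _ = (starRingEnd ℂ) (w i) * u * A i j := by ring
                · -- diagonal entry i = j with value k
                  have hik3 : (i : ℕ) = k := by omega
                  have hije : i = j := Fin.ext (by omega)
                  subst hije
                  rw [hA'diag i, hAdiag i, if_neg hik2, if_pos hik3]
                  rw [conj_mul_eq_one hu1, one_mul]
              · have hlt : (j : ℕ) < (i : ℕ) := by omega
                rw [hA'_triangular i j hlt, hA_triangular i j hlt, mul_zero]
    obtain ⟨w, hw1, hw2⟩ := main n (le_refl n)
    refine ⟨Matrix.diagonal w, ?_, Matrix.isDiag_diagonal w, ?_⟩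
    · rw [Matrix.mem_unitaryGroup_iff]
      exact (diag_unitary w hw1).1
    · ext i j
      rw [conj_diag_apply, hw2 i j j.isLt]
      ring
  · rintro ⟨W, hWu, hWdiag, hW⟩ k hk1 hkn f
    set w : Fin n → ℂ := fun i => W i i with hwdef
    have hWdg : W = Matrix.diagonal w := by
      rw [← Matrix.IsDiag.diagonal_diag hWdiag]
      rfl
    have hw1 : ∀ i, ‖w i‖ = 1 := by
      intro i
      have hsW : star W * W = 1 := Matrix.mem_unitaryGroup_iff'.mp hWu
      rw [hWdg, star_diagonal, Matrix.diagonal_mul_diagonal] at hsW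
      have := congrArg (fun M : Matrix (Fin n) (Fin n) ℂ => M i i) hsW
      simp only [Matrix.diagonal_apply_eq, Matrix.one_apply_eq] at this
      exact norm_one_of_conj_mul this
    set wk : Fin k → ℂ := fun i => w (Fin.castLE hkn i) with hwk
    have hwk1 : ∀ i, ‖wk i‖ = 1 := fun i => hw1 _
    have hsub : leadingSubmatrix A' k hkn
        = star (Matrix.diagonal wk) * leadingSubmatrix A k hkn * Matrix.diagonal wk := by
      ext i j
      rw [conj_diag_apply, hL, hL, hW, hWdg, conj_diag_apply]
    have hU := diag_unitary wk hwk1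
    rw [hsub, aeval_conj _ _ hU.1 hU.2 f]
    exact (opNorm_conj_diag wk hwk1 _).symm
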